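/- If Q_{t+1}^k ≤ Q_{t+1} are convex functions on 𝒳_t, f_t(·,·,ξ_m) is strongly convex with constant α_{tm} on 𝒳_t × 𝒳_{t-1}, and 𝔔̲_t^k(x, ξ_m) = inf { f_t(y, x, ξ_m) + Q_{t+1}^k(y) : y ∈ X_t(x, ξ_m) } with X_t(x, ξ_m) defined by linear equality constraints and jointly convex inequality constraints and the infimum attained, then 𝔔̲_t^k(·, ξ_m) is strongly convex on 𝒳_{t-1} with constant α_{tm}, and the true stage value function 𝔔_t(·, ξ_m) satisfies 𝔔_t(x, ξ_m) ≥ 𝔔̲_t^k(x, ξ_m) for all x ∈ 𝒳_{t-1}. -/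

import Mathlib

open Set

def StrongConvexOnSet {E : Type*} [NormedAddCommGroup E] [NormedSpace ℝ E]
    (s : Set E) (a : ℝ) (f : E → ℝ) : Prop :=
  ∀ x ∈ s, ∀ y ∈ s, ∀ t : ℝ, 0 ≤ t → t ≤ 1 →
    f (t • x + (1 - t) • y) ≤ t * f x + (1 - t) * f y - a / 2 * (t * (1 - t)) * ‖y - x‖ ^ 2

/-- Strong convexity and validity of the approximate stage value function
`𝔔̲_t^k(·, ξ_m)`: it is strongly convex with constant `α_tm` on `𝒳_{t-1}` and lower
bounds the true stage value function `𝔔_t(·, ξ_m)`. Strong convexity of `f_t(·,·,ξ_m)`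
is with respect to the Euclidean norm on the product, modelled via `WithLp 2`. -/
theorem approx_stage_value_strongly_convex {n P q : ℕ}
    (Xt Xt1 : Set (EuclideanSpace ℝ (Fin n)))
    (hXt : Convex ℝ Xt) (hXt1 : Convex ℝ Xt1)
    (hXtne : Xt.Nonempty) (hXt1ne : Xt1.Nonempty)
    (hXtcp : IsCompact Xt) (hXt1cp : IsCompact Xt1)
    (Qnext Qnextlow : EuclideanSpace ℝ (Fin n) → ℝ)
    (hQnext : ConvexOn ℝ Xt Qnext) (hQnextlow : ConvexOn ℝ Xt Qnextlow)
    (hle : ∀ y ∈ Xt, Qnextlow y ≤ Qnext y)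
    (f : WithLp 2 (EuclideanSpace ℝ (Fin n) × EuclideanSpace ℝ (Fin n)) → ℝ)
    (a : ℝ) (ha : 0 < a)
    (hf : StrongConvexOnSet
      ((WithLp.equiv 2 (EuclideanSpace ℝ (Fin n) × EuclideanSpace ℝ (Fin n))).symm ''
        (Xt ×ˢ Xt1)) a f)
    (A B : EuclideanSpace ℝ (Fin n) →ₗ[ℝ] EuclideanSpace ℝ (Fin P))
    (b : EuclideanSpace ℝ (Fin P))
    (g : Fin q → EuclideanSpace ℝ (Fin n) × EuclideanSpace ℝ (Fin n) → ℝ)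
    (hg : ∀ i, ConvexOn ℝ (Xt ×ˢ Xt1) (g i))
    (Qlowval : EuclideanSpace ℝ (Fin n) → ℝ)
    (hatt : ∀ x ∈ Xt1, IsLeast
      ((fun y => f ((WithLp.equiv 2 _).symm (y, x)) + Qnextlow y) ''
        {y ∈ Xt | A y + B x = b ∧ ∀ i, g i (y, x) ≤ 0}) (Qlowval x))
    (Qval : EuclideanSpace ℝ (Fin n) → ℝ)
    (hQval : ∀ x, Qval x = sInf
      ((fun y => f ((WithLp.equiv 2 _).symm (y, x)) + Qnext y) ''
        {y ∈ Xt | A y + B x = b ∧ ∀ i, g i (y, x) ≤ 0})) :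
    StrongConvexOnSet Xt1 a Qlowval ∧ ∀ x ∈ Xt1, Qlowval x ≤ Qval x := by
  constructor
  · intro x1 hx1 x2 hx2 t ht0 ht1
    obtain ⟨hmem1, hlb1⟩ := hatt x1 hx1
    obtain ⟨hmem2, hlb2⟩ := hatt x2 hx2
    obtain ⟨y1, ⟨hy1X, hA1, hg1⟩, hv1⟩ := hmem1
    obtain ⟨y2, ⟨hy2X, hA2, hg2⟩, hv2⟩ := hmem2
    set xt := t • x1 + (1 - t) • x2 with hxtdef
    set yt := t • y1 + (1 - t) • y2 with hytdef
    have ht0' : (0:ℝ) ≤ 1 - t := by linarith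
    have hxt : xt ∈ Xt1 := hXt1 hx1 hx2 ht0 ht0' (by ring)
    have hyt : yt ∈ Xt := hXt hy1X hy2X ht0 ht0' (by ring)
    obtain ⟨hmemt, hlbt⟩ := hatt xt hxt
    have hfeas : yt ∈ {y ∈ Xt | A y + B xt = b ∧ ∀ i, g i (y, xt) ≤ 0} := by
      refine ⟨hyt, ?_, ?_⟩
      · have h : A yt + B xt = t • (A y1 + B x1) + (1 - t) • (A y2 + B x2) := by
          simp only [hytdef, hxtdef, map_add, map_smul, smul_add]
          abel
        rw [h, hA1, hA2, ← add_smul]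
        norm_num
      · intro i
        have hgc := (hg i).2 (Set.mk_mem_prod hy1X hx1) (Set.mk_mem_prod hy2X hx2)
          ht0 ht0' (by ring)
        have heq : t • ((y1, x1) : EuclideanSpace ℝ (Fin n) × EuclideanSpace ℝ (Fin n))
            + (1 - t) • (y2, x2) = (yt, xt) := by
          simp [Prod.ext_iff, hytdef, hxtdef]
        rw [heq] at hgc
        have h1 := hg1 i
        have h2 := hg2 i
        simp only [smul_eq_mul] at hgc
        nlinarith
    have hstep : Qlowval xt ≤ f ((WithLp.equiv 2 _).symm (yt, xt)) + Qnextlow yt :=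
      hlbt (mem_image_of_mem _ hfeas)
    have hfmem1 : (WithLp.equiv 2 (EuclideanSpace ℝ (Fin n) × EuclideanSpace ℝ (Fin n))).symm
        (y1, x1) ∈ (WithLp.equiv 2 _).symm '' (Xt ×ˢ Xt1) :=
      mem_image_of_mem _ (mem_prod.2 ⟨hy1X, hx1⟩)
    have hfmem2 : (WithLp.equiv 2 (EuclideanSpace ℝ (Fin n) × EuclideanSpace ℝ (Fin n))).symm
        (y2, x2) ∈ (WithLp.equiv 2 _).symm '' (Xt ×ˢ Xt1) :=
      mem_image_of_mem _ (mem_prod.2 ⟨hy2X, hx2⟩)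
    have hfc := hf _ hfmem1 _ hfmem2 t ht0 ht1
    have heqf : t • (WithLp.equiv 2 (EuclideanSpace ℝ (Fin n) × EuclideanSpace ℝ (Fin n))).symm
        (y1, x1) + (1 - t) • (WithLp.equiv 2 _).symm (y2, x2)
        = (WithLp.equiv 2 _).symm (yt, xt) := by
      apply (WithLp.equiv 2 _).injective
      simp [Prod.ext_iff, hytdef, hxtdef]
    rw [heqf] at hfc
    have hnorm : ‖x2 - x1‖ ^ 2 ≤
        ‖(WithLp.equiv 2 (EuclideanSpace ℝ (Fin n) × EuclideanSpace ℝ (Fin n))).symm (y2, x2)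
          - (WithLp.equiv 2 _).symm (y1, x1)‖ ^ 2 := by
      have hsub : (WithLp.equiv 2 (EuclideanSpace ℝ (Fin n) × EuclideanSpace ℝ (Fin n))).symm
          (y2, x2) - (WithLp.equiv 2 _).symm (y1, x1)
          = (WithLp.equiv 2 _).symm (y2 - y1, x2 - x1) := by
        apply (WithLp.equiv 2 _).injective
        simp [Prod.ext_iff]
      rw [hsub, WithLp.prod_norm_sq_eq_of_L2]
      have : (0:ℝ) ≤ ‖y2 - y1‖ ^ 2 := by positivity
      simp only [WithLp.equiv_symm_apply, WithLp.toLp_fst, WithLp.toLp_snd]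
      linarith
    have hql := hQnextlow.2 hy1X hy2X ht0 ht0' (by ring : t + (1 - t) = 1)
    rw [← hytdef] at hql
    have hcoef : (0:ℝ) ≤ a / 2 * (t * (1 - t)) := by positivity
    have hnorm' : a / 2 * (t * (1 - t)) * ‖x2 - x1‖ ^ 2 ≤
        a / 2 * (t * (1 - t)) * ‖(WithLp.equiv 2 (EuclideanSpace ℝ (Fin n) ×
          EuclideanSpace ℝ (Fin n))).symm (y2, x2) - (WithLp.equiv 2 _).symm (y1, x1)‖ ^ 2 :=
      mul_le_mul_of_nonneg_left hnorm hcoef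
    have h1 : f ((WithLp.equiv 2 _).symm (y1, x1)) + Qnextlow y1 = Qlowval x1 := hv1
    have h2 : f ((WithLp.equiv 2 _).symm (y2, x2)) + Qnextlow y2 = Qlowval x2 := hv2
    have e1 : t * (f ((WithLp.equiv 2 _).symm (y1, x1)) + Qnextlow y1) = t * Qlowval x1 := by
      rw [h1]
    have e2 : (1 - t) * (f ((WithLp.equiv 2 _).symm (y2, x2)) + Qnextlow y2)
        = (1 - t) * Qlowval x2 := by rw [h2]
    have hql' : (1 - t) * Qnextlow yt ≤ (1 - t) * (t * Qnextlow y1 + (1 - t) * Qnextlow y2) :=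
      mul_le_mul_of_nonneg_left hql ht0'
    clear_value yt xt
    have hfc' : f ((WithLp.equiv 2 _).symm (yt, xt)) ≤
        t * f ((WithLp.equiv 2 _).symm (y1, x1)) + (1 - t) * f ((WithLp.equiv 2 _).symm (y2, x2))
          - a / 2 * (t * (1 - t)) * ‖x2 - x1‖ ^ 2 := by linarith [hfc, hnorm']
    calc Qlowval xt ≤ f ((WithLp.equiv 2 _).symm (yt, xt)) + Qnextlow yt := hstep
      _ ≤ (t * f ((WithLp.equiv 2 _).symm (y1, x1))
            + (1 - t) * f ((WithLp.equiv 2 _).symm (y2, x2))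
            - a / 2 * (t * (1 - t)) * ‖x2 - x1‖ ^ 2)
          + (t * Qnextlow y1 + (1 - t) * Qnextlow y2) := add_le_add hfc' hql
      _ = t * (f ((WithLp.equiv 2 _).symm (y1, x1)) + Qnextlow y1)
          + (1 - t) * (f ((WithLp.equiv 2 _).symm (y2, x2)) + Qnextlow y2)
          - a / 2 * (t * (1 - t)) * ‖x2 - x1‖ ^ 2 := by ring
      _ = t * Qlowval x1 + (1 - t) * Qlowval x2
          - a / 2 * (t * (1 - t)) * ‖x2 - x1‖ ^ 2 := by rw [h1, h2]
  · intro x hx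
    rw [hQval x]
    obtain ⟨⟨y0, hy0, hv0⟩, hlb⟩ := hatt x hx
    apply le_csInf ⟨_, mem_image_of_mem _ hy0⟩
    rintro v ⟨y, hy, rfl⟩
    have h1 : Qlowval x ≤ f ((WithLp.equiv 2 _).symm (y, x)) + Qnextlow y :=
      hlb (mem_image_of_mem _ hy)
    have h2 : Qnextlow y ≤ Qnext y := hle y hy.1
    simp only
    linarith
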